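/- Let A be a nonempty finite alphabet with a dissimilarity function d : A × A → ℝ≥0, let s_1, …, s_n be strings in A^ℓ, let k ≥ 1, and let t ∈ ℝ. Extend d to strings of equal length by D(u,v) = Σ_{p=1}^{ℓ} d(u(p), v(p)). Then the following are equivalent: (1) there exist k strings m_1, …, m_k ∈ A^ℓ such that Σ_{i=1}^{n} min_{1 ≤ j ≤ k} D(s_i, m_j) ≤ t; (2) there exist a string W ∈ A^{kℓ} and an assignment σ : {1,…,n} → {1,…,k} such that Σ_{i=1}^{n} Σ_{p=1}^{ℓ} d(s_i(p), W((σ(i)−1)·ℓ + p)) ≤ t. -/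
import Mathlib


/-- Correctness of the reduction from k-string-median to
Clustered-Kemeny. With `D(u,v) = Σ_p d(u(p), v(p))` on strings of length `ℓ`,
there exist `k` median strings `m_1,…,m_k ∈ A^ℓ` with
`Σ_i min_j D(s_i, m_j) ≤ t` iff there exist a string `W ∈ A^{kℓ}` and an
assignment `σ` of agents to the `k` contiguous length-`ℓ` blocks of `W` with
`Σ_i Σ_p d(s_i(p), W(σ(i)·ℓ + p)) ≤ t` (blocks and positions 0-indexed). -/
theorem kMedian_iff_clusteredKemeny
    {A : Type*} [Fintype A] [DecidableEq A] [Nonempty A]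
    {n ℓ k : ℕ} (hn : 1 ≤ n) (hℓ : 1 ≤ ℓ) (hk : 1 ≤ k)
    (s : Fin n → Fin ℓ → A) (d : A → A → ℝ) (hd : ∀ a a' : A, 0 ≤ d a a')
    (t : ℝ) :
    (∃ m : Fin k → Fin ℓ → A,
      (∑ i : Fin n, Finset.univ.inf' (Finset.univ_nonempty_iff.mpr ⟨⟨0, hk⟩⟩)
          (fun j : Fin k => ∑ p : Fin ℓ, d (s i p) (m j p))) ≤ t)
    ↔ (∃ (W : Fin (k * ℓ) → A) (σ : Fin n → Fin k),
        (∑ i : Fin n, ∑ p : Fin ℓ,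
          d (s i p) (W ⟨(σ i).val * ℓ + p.val, by
            have h1 := (σ i).isLt
            have h2 := p.isLt
            calc (σ i).val * ℓ + p.val < ((σ i).val + 1) * ℓ := by
                  rw [Nat.succ_mul]; omega
              _ ≤ k * ℓ := Nat.mul_le_mul_right ℓ h1⟩)) ≤ t) := by
  have hℓpos : 0 < ℓ := hℓ
  constructor
  · rintro ⟨m, hm⟩
    refine ⟨fun q => m ⟨q.val / ℓ, ?_⟩ ⟨q.val % ℓ, Nat.mod_lt _ hℓpos⟩, ?_, ?_⟩
    · exact (Nat.div_lt_iff_lt_mul hℓpos).mpr q.isLt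
    · exact fun i => Classical.choose
        (Finset.exists_mem_eq_inf' (Finset.univ_nonempty_iff.mpr ⟨⟨0, hk⟩⟩)
          (fun j : Fin k => ∑ p : Fin ℓ, d (s i p) (m j p)))
    · refine le_trans (le_of_eq ?_) hm
      refine Finset.sum_congr rfl fun i _ => ?_
      set σi := Classical.choose
        (Finset.exists_mem_eq_inf' (Finset.univ_nonempty_iff.mpr ⟨⟨0, hk⟩⟩)
          (fun j : Fin k => ∑ p : Fin ℓ, d (s i p) (m j p))) with hσi
      have hspec := Classical.choose_spec
        (Finset.exists_mem_eq_inf' (Finset.univ_nonempty_iff.mpr ⟨⟨0, hk⟩⟩)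
          (fun j : Fin k => ∑ p : Fin ℓ, d (s i p) (m j p)))
      rw [hspec.2]
      refine Finset.sum_congr rfl fun p _ => ?_
      have e1 : ((σi : ℕ) * ℓ + p.val) / ℓ = σi.val := by
        rw [mul_comm, Nat.mul_add_div hℓpos, Nat.div_eq_of_lt p.isLt, Nat.add_zero]
      have e2 : ((σi : ℕ) * ℓ + p.val) % ℓ = p.val := by
        rw [mul_comm, Nat.mul_add_mod, Nat.mod_eq_of_lt p.isLt]
      exact congrArg (d (s i p)) (congrArg₂ m (Fin.ext e1) (Fin.ext e2))
  · rintro ⟨W, σ, hW⟩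
    refine ⟨fun j p => W ⟨j.val * ℓ + p.val, ?_⟩, ?_⟩
    · calc j.val * ℓ + p.val < (j.val + 1) * ℓ := by rw [Nat.succ_mul]; omega
        _ ≤ k * ℓ := Nat.mul_le_mul_right ℓ j.isLt
    · refine le_trans (Finset.sum_le_sum fun i _ => ?_) hW
      exact Finset.inf'_le _ (Finset.mem_univ (σ i))
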